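/- Let b₀, a₀ > 0 with ψ∞ := ln b₀ − (a₀/2)(ln λ − ln a₀)/(λ−a₀) (with continuation ln b₀ − 1/2 if a₀ = λ). If ψ∞ < 0 then the Gaussian solution u(t,x) = e^{ψ(t)e^{2λt}} e^{−a(t)x²/2} satisfies sup_x u(t,x) / (e^{1/2} e^{ψ∞ e^{2λt}}) → 1 as t → ∞; in particular ‖u(t,·)‖_∞ decays like a double exponential. -/

import Mathlib

open Filter

lemma sup_gauss (C b : ℝ) (hC : 0 < C) (hb : 0 ≤ b) :
    (⨆ x : ℝ, C * Real.exp (-(b * x ^ 2 / 2))) = C := by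
  apply le_antisymm
  · apply ciSup_le
    intro x
    have : Real.exp (-(b * x ^ 2 / 2)) ≤ 1 := by
      apply Real.exp_le_one_iff.mpr
      have : 0 ≤ b * x ^ 2 / 2 := by positivity
      linarith
    nlinarith
  · have hbdd : BddAbove (Set.range fun x : ℝ => C * Real.exp (-(b * x ^ 2 / 2))) := by
      refine ⟨C, ?_⟩
      rintro y ⟨x, rfl⟩
      have : Real.exp (-(b * x ^ 2 / 2)) ≤ 1 := by
        apply Real.exp_le_one_iff.mpr
        have : 0 ≤ b * x ^ 2 / 2 := by positivity
        linarith
      nlinarith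
    have := le_ciSup hbdd (0 : ℝ)
    simpa using this

theorem gaussian_superexponential_decay (lam a₀ b₀ : ℝ) (hlam : 0 < lam) (ha₀ : 0 < a₀)
    (hb₀ : 0 < b₀)
    (a : ℝ → ℝ)
    (ha : ∀ t, a t = lam * a₀ * Real.exp (2 * lam * t) /
        (lam - a₀ + a₀ * Real.exp (2 * lam * t)))
    (ψ : ℝ → ℝ)
    (hψ : ∀ t, ψ t = if a₀ = lam then Real.log b₀ - (1 / 2) * (1 - Real.exp (-(2 * lam * t)))
        else Real.log b₀ - (a₀ / 2) *
          (Real.log lam - Real.log (a₀ + (lam - a₀) * Real.exp (-(2 * lam * t)))) / (lam - a₀))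
    (ψinf : ℝ)
    (hψinf : ψinf = if a₀ = lam then Real.log b₀ - 1 / 2
        else Real.log b₀ - (a₀ / 2) * (Real.log lam - Real.log a₀) / (lam - a₀))
    (hneg : ψinf < 0)
    (u : ℝ → ℝ → ℝ)
    (hu : ∀ t x, u t x = Real.exp (ψ t * Real.exp (2 * lam * t)) *
        Real.exp (-(a t * x ^ 2 / 2))) :
    Tendsto (fun t => (⨆ x : ℝ, u t x) /
        (Real.exp (1 / 2) * Real.exp (ψinf * Real.exp (2 * lam * t)))) atTop (nhds 1) := by
  set g : ℝ → ℝ := fun t => (ψ t - ψinf) * Real.exp (2 * lam * t) - 1 / 2 with hg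
  -- the limit of the exponent
  have hgto : Tendsto g atTop (nhds 0) := by
    by_cases hcase : a₀ = lam
    · have : g = fun _ => 0 := by
        funext t
        have hmul : Real.exp (-(2 * lam * t)) * Real.exp (2 * lam * t) = 1 := by
          rw [← Real.exp_add]; simp
        simp only [hg, hψ, hψinf, if_pos hcase]
        nlinarith [hmul]
      rw [this]; exact tendsto_const_nhds
    · have hne : lam - a₀ ≠ 0 := fun h => hcase (by linarith)
      -- slope of log (a₀ + (lam - a₀) ε) at 0
      have hderiv : HasDerivAt (fun ε : ℝ => Real.log (a₀ + (lam - a₀) * ε))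
          ((lam - a₀) / a₀) 0 := by
        have h1 : HasDerivAt (fun ε : ℝ => a₀ + (lam - a₀) * ε) (lam - a₀) 0 := by
          simpa using ((hasDerivAt_id (0:ℝ)).const_mul (lam - a₀)).const_add a₀
        have h2 := (Real.hasDerivAt_log (x := a₀ + (lam - a₀) * 0) (by simp; positivity)).comp 0 h1
        simpa [div_eq_inv_mul, Function.comp_def] using h2
      have hslope := hasDerivAt_iff_tendsto_slope.mp hderiv
      have hεto : Tendsto (fun t : ℝ => Real.exp (-(2 * lam * t))) atTop (nhdsWithin 0 {(0:ℝ)}ᶜ) := by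
        apply tendsto_nhdsWithin_of_tendsto_nhds_of_eventually_within
        · have h1 : Tendsto (fun t : ℝ => 2 * lam * t) atTop atTop := by
            apply Tendsto.const_mul_atTop (by positivity : (0:ℝ) < 2 * lam) tendsto_id
          have h2 := Real.tendsto_exp_neg_atTop_nhds_zero.comp h1
          exact h2.congr fun t => by simp [Function.comp]
        · exact Eventually.of_forall fun t => Real.exp_ne_zero _
      have hcomp := hslope.comp hεto
      have hto : Tendsto (fun t => (a₀ / (2 * (lam - a₀))) *
          slope (fun ε : ℝ => Real.log (a₀ + (lam - a₀) * ε)) 0 (Real.exp (-(2 * lam * t))) - 1/2)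
          atTop (nhds ((a₀ / (2 * (lam - a₀))) * ((lam - a₀) / a₀) - 1/2)) :=
        ((hcomp.const_mul _).sub_const _)
      have hval : (a₀ / (2 * (lam - a₀))) * ((lam - a₀) / a₀) - 1/2 = 0 := by
        field_simp
        ring
      rw [hval] at hto
      apply hto.congr
      intro t
      have hεne : Real.exp (-(2 * lam * t)) ≠ 0 := Real.exp_ne_zero _
      have hinv : Real.exp (2 * lam * t) = (Real.exp (-(2 * lam * t)))⁻¹ := by
        rw [← Real.exp_neg]; ring_nf
      simp only [hg, hψ, hψinf, if_neg hcase, slope_def_field]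
      rw [hinv]
      field_simp
      ring
  -- eventual equality of the ratio with exp ∘ g
  have hmain : Tendsto (fun t => Real.exp (g t)) atTop (nhds 1) := by
    have := (Real.continuous_exp.tendsto 0).comp hgto
    simpa [Function.comp_def] using this
  apply hmain.congr'
  filter_upwards [eventually_ge_atTop (0:ℝ)] with t ht
  have hE1 : (1:ℝ) ≤ Real.exp (2 * lam * t) := Real.one_le_exp (by positivity)
  have hden : 0 < lam - a₀ + a₀ * Real.exp (2 * lam * t) := by nlinarith
  have hat : 0 ≤ a t := by
    rw [ha]
    positivity
  have hsup : (⨆ x : ℝ, u t x) = Real.exp (ψ t * Real.exp (2 * lam * t)) := by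
    have := sup_gauss (Real.exp (ψ t * Real.exp (2 * lam * t))) (a t) (Real.exp_pos _) hat
    rw [← this]
    congr 1
    funext x
    rw [hu]
  rw [hsup, ← Real.exp_add, ← Real.exp_sub]
  congr 1
  simp only [hg]
  ring
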